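/- For every integer m, every integer r ≥ 1, and every nonnegative integer k: ∑_{j=0}^{k} ∑_{s=0}^{j} C(k,j)·C(j,s)·(T_{r−1}+T_r)^{j−s}·T_{r+1}^s / T_r^j · T_{m−(r+2)k+j+s} = T_m / T_r^k. -/

import Mathlib

/-- Tribonacci numbers on the naturals. -/
def tribN : ℕ → ℤ
  | 0 => 0
  | 1 => 1
  | 2 => 1
  | n + 3 => tribN (n + 2) + tribN (n + 1) + tribN n

/-- Tribonacci at negative indices: `tribNeg n = T (-n)`, via `T (-n) = 2·T (3-n) - T (4-n)`. -/
def tribNeg : ℕ → ℤ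
  | 0 => tribN 0
  | 1 => 2 * tribN 2 - tribN 3
  | 2 => 2 * tribN 1 - tribN 2
  | 3 => 2 * tribN 0 - tribN 1
  | 4 => 2 * tribNeg 1 - tribN 0
  | n + 5 => 2 * tribNeg (n + 2) - tribNeg (n + 1)

/-- Tribonacci sequence extended to all integers. -/
def T (m : ℤ) : ℤ := if 0 ≤ m then tribN m.toNat else tribNeg (-m).toNat

lemma tribNeg_rec : ∀ n : ℕ, tribNeg n = tribNeg (n+1) + tribNeg (n+2) + tribNeg (n+3) := by
  have h : ∀ n : ℕ, tribNeg (n+1) = tribNeg (n+2) + tribNeg (n+3) + tribNeg (n+4) := by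
    intro n
    induction n with
    | zero => decide
    | succ n ih =>
      have h5 : tribNeg (n+5) = 2 * tribNeg (n+2) - tribNeg (n+1) := rfl
      show tribNeg (n+2) = tribNeg (n+3) + tribNeg (n+4) + tribNeg (n+5)
      rw [h5]; linarith [ih]
  intro n
  cases n with
  | zero => decide
  | succ n => exact h n

lemma Tadd3 (m : ℤ) : T (m+3) = T (m+2) + T (m+1) + T m := by
  rcases le_or_gt 0 m with hm | hm
  · have e3 : (m+3).toNat = m.toNat + 3 := by omega
    have e2 : (m+2).toNat = m.toNat + 2 := by omega
    have e1 : (m+1).toNat = m.toNat + 1 := by omega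
    simp only [T, if_pos (by omega : (0:ℤ) ≤ m+3), if_pos (by omega : (0:ℤ) ≤ m+2),
      if_pos (by omega : (0:ℤ) ≤ m+1), if_pos hm, e3, e2, e1]
    rfl
  · rcases lt_or_ge m (-3) with h4 | h4
    · have n0 : (-(m+3)).toNat + 1 = (-(m+2)).toNat := by omega
      have n1 : (-(m+3)).toNat + 2 = (-(m+1)).toNat := by omega
      have n2 : (-(m+3)).toNat + 3 = (-m).toNat := by omega
      simp only [T, if_neg (by omega : ¬ (0:ℤ) ≤ m+3), if_neg (by omega : ¬ (0:ℤ) ≤ m+2),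
        if_neg (by omega : ¬ (0:ℤ) ≤ m+1), if_neg (by omega : ¬ (0:ℤ) ≤ m)]
      rw [← n0, ← n1, ← n2]
      exact tribNeg_rec _
    · interval_cases m <;> decide

lemma TrecE (x a b c : ℤ) (h1 : a + 1 = x) (h2 : b + 2 = x) (h3 : c + 3 = x) :
    T x = T a + T b + T c := by
  subst h3
  have h := Tadd3 c
  rw [show c + 2 = a by omega, show c + 1 = b by omega] at h
  exact h

lemma Tval0 : T 0 = 0 := by decide
lemma Tval1 : T 1 = 1 := by decide
lemma Tval2 : T 2 = 1 := by decide
lemma Tval3 : T 3 = 2 := by decide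
lemma Tval4 : T 4 = 4 := by decide

lemma baseId : ∀ n : ℕ, ∀ a : ℤ,
    T ((n:ℤ)+1) * T a + (T (n:ℤ) + T ((n:ℤ)+1)) * T (a+1) + T ((n:ℤ)+2) * T (a+2)
      = T (a + (n:ℤ) + 3) := by
  have key : ∀ n : ℕ, (∀ a : ℤ,
      T ((n:ℤ)+1) * T a + (T (n:ℤ) + T ((n:ℤ)+1)) * T (a+1) + T ((n:ℤ)+2) * T (a+2)
        = T (a + (n:ℤ) + 3)) ∧ (∀ a : ℤ,
      T ((n:ℤ)+2) * T a + (T ((n:ℤ)+1) + T ((n:ℤ)+2)) * T (a+1) + T ((n:ℤ)+3) * T (a+2)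
        = T (a + (n:ℤ) + 4)) ∧ (∀ a : ℤ,
      T ((n:ℤ)+3) * T a + (T ((n:ℤ)+2) + T ((n:ℤ)+3)) * T (a+1) + T ((n:ℤ)+4) * T (a+2)
        = T (a + (n:ℤ) + 5)) := by
    intro n
    induction n with
    | zero =>
      norm_num [Tval0, Tval1, Tval2, Tval3, Tval4]
      refine ⟨fun a => ?_, fun a => ?_, fun a => ?_⟩
      · have h3 : T (a+3) = T (a+2) + T (a+1) + T a := TrecE _ _ _ _ (by ring) (by ring) (by ring)
        linarith
      · have h3 : T (a+3) = T (a+2) + T (a+1) + T a := TrecE _ _ _ _ (by ring) (by ring) (by ring)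
        have h4 : T (a+4) = T (a+3) + T (a+2) + T (a+1) := TrecE _ _ _ _ (by ring) (by ring) (by ring)
        linarith
      · have h3 : T (a+3) = T (a+2) + T (a+1) + T a := TrecE _ _ _ _ (by ring) (by ring) (by ring)
        have h4 : T (a+4) = T (a+3) + T (a+2) + T (a+1) := TrecE _ _ _ _ (by ring) (by ring) (by ring)
        have h5 : T (a+5) = T (a+4) + T (a+3) + T (a+2) := TrecE _ _ _ _ (by ring) (by ring) (by ring)
        linarith
    | succ n ih =>
      obtain ⟨h0, h1, h2⟩ := ih
      have cast1 : ((n+1 : ℕ) : ℤ) = (n:ℤ) + 1 := by push_cast; ring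
      refine ⟨fun a => ?_, fun a => ?_, fun a => ?_⟩
      · rw [cast1, show (n:ℤ)+1+1 = (n:ℤ)+2 by ring, show (n:ℤ)+1+2 = (n:ℤ)+3 by ring,
          show a+((n:ℤ)+1)+3 = a+(n:ℤ)+4 by ring]
        exact h1 a
      · rw [cast1, show (n:ℤ)+1+1 = (n:ℤ)+2 by ring, show (n:ℤ)+1+2 = (n:ℤ)+3 by ring,
          show (n:ℤ)+1+3 = (n:ℤ)+4 by ring, show a+((n:ℤ)+1)+4 = a+(n:ℤ)+5 by ring]
        exact h2 a
      · rw [cast1, show (n:ℤ)+1+2 = (n:ℤ)+3 by ring, show (n:ℤ)+1+3 = (n:ℤ)+4 by ring,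
          show (n:ℤ)+1+4 = (n:ℤ)+5 by ring, show a+((n:ℤ)+1)+5 = a+(n:ℤ)+6 by ring]
        have e0 := h0 a
        have e1 := h1 a
        have e2 := h2 a
        have r3 : T ((n:ℤ)+3) = T ((n:ℤ)+2) + T ((n:ℤ)+1) + T (n:ℤ) :=
          TrecE _ _ _ _ (by ring) (by ring) (by ring)
        have r4 : T ((n:ℤ)+4) = T ((n:ℤ)+3) + T ((n:ℤ)+2) + T ((n:ℤ)+1) :=
          TrecE _ _ _ _ (by ring) (by ring) (by ring)
        have r5 : T ((n:ℤ)+5) = T ((n:ℤ)+4) + T ((n:ℤ)+3) + T ((n:ℤ)+2) :=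
          TrecE _ _ _ _ (by ring) (by ring) (by ring)
        have rA : T (a+(n:ℤ)+6) = T (a+(n:ℤ)+5) + T (a+(n:ℤ)+4) + T (a+(n:ℤ)+3) :=
          TrecE _ _ _ _ (by ring) (by ring) (by ring)
        linear_combination e0 + e1 + e2 + T a * r4 + T (a+1) * (r3 + r4) + T (a+2) * r5 - rA
  exact fun n => (key n).1

lemma baseZ (r : ℤ) (hr : 1 ≤ r) (a : ℤ) :
    T r * T a + (T (r-1) + T r) * T (a+1) + T (r+1) * T (a+2) = T (a + r + 2) := by
  have h := baseId (r-1).toNat a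
  rw [show (((r-1).toNat : ℕ) : ℤ) = r - 1 by omega, show r-1+1 = r by ring,
    show r-1+2 = r+1 by ring, show a+(r-1)+3 = a+r+2 by ring] at h
  exact h

lemma tribN_pos : ∀ n : ℕ, 0 ≤ tribN n ∧ 1 ≤ tribN (n+1) ∧ 1 ≤ tribN (n+2) := by
  intro n
  induction n with
  | zero => decide
  | succ n ih =>
    obtain ⟨h0, h1, h2⟩ := ih
    refine ⟨by linarith, h2, ?_⟩
    show 1 ≤ tribN (n+2) + tribN (n+1) + tribN n
    linarith

lemma T_ne {r : ℤ} (hr : 1 ≤ r) : ((T r : ℤ) : ℚ) ≠ 0 := by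
  have h1 : T r = tribN r.toNat := by
    simp only [T, if_pos (by omega : (0:ℤ) ≤ r)]
  have h2 : r.toNat = (r.toNat - 1) + 1 := by omega
  have := (tribN_pos (r.toNat - 1)).2.1
  rw [h1, h2]
  intro hc
  rw [show ((tribN (r.toNat - 1 + 1) : ℤ) : ℚ) = 0 ↔ tribN (r.toNat - 1 + 1) = 0 from
    Int.cast_eq_zero] at hc
  omega

open Polynomial

noncomputable def Lf (m0 : ℤ) (p : Polynomial ℚ) : ℚ :=
  p.sum fun n a => a * ((T (m0 + n) : ℤ) : ℚ)

lemma Lf_add (m0 : ℤ) (p q : Polynomial ℚ) : Lf m0 (p + q) = Lf m0 p + Lf m0 q :=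
  Polynomial.sum_add_index p q _ (fun i => by simp) (fun a b c => by ring)

lemma Lf_zero (m0 : ℤ) : Lf m0 0 = 0 := by simp [Lf]

lemma Lf_monomial (m0 : ℤ) (n : ℕ) (a : ℚ) :
    Lf m0 (monomial n a) = a * ((T (m0 + n) : ℤ) : ℚ) := by
  rw [Lf, Polynomial.sum_monomial_index]
  simp

lemma Lf_sum (m0 : ℤ) {ι : Type*} (s : Finset ι) (f : ι → Polynomial ℚ) :
    Lf m0 (∑ i ∈ s, f i) = ∑ i ∈ s, Lf m0 (f i) := by
  classical
  induction s using Finset.induction_on with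
  | empty => simp [Lf_zero]
  | insert a s h ih => rw [Finset.sum_insert h, Finset.sum_insert h, Lf_add, ih]

lemma Lf_mul_X (m0 : ℤ) (p : Polynomial ℚ) : Lf m0 (p * X) = Lf (m0 + 1) p := by
  induction p using Polynomial.induction_on' with
  | add p q hp hq => rw [add_mul, Lf_add, Lf_add, hp, hq]
  | monomial n a =>
    rw [show (monomial n a : Polynomial ℚ) * X = monomial (n+1) a by
      rw [← C_mul_X_pow_eq_monomial, ← C_mul_X_pow_eq_monomial]; ring,
      Lf_monomial, Lf_monomial]
    congr 2
    push_cast; ring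

lemma Lf_C_mul (m0 : ℤ) (c : ℚ) (p : Polynomial ℚ) : Lf m0 (C c * p) = c * Lf m0 p := by
  induction p using Polynomial.induction_on' with
  | add p q hp hq => rw [mul_add, Lf_add, Lf_add, hp, hq, mul_add]
  | monomial n a =>
    rw [show (C c) * (monomial n a : Polynomial ℚ) = monomial n (c * a) by
      simp [C_mul_monomial], Lf_monomial, Lf_monomial]
    ring

lemma Lf_one (m0 : ℤ) : Lf m0 1 = ((T m0 : ℤ) : ℚ) := by
  have : (1 : Polynomial ℚ) = monomial 0 1 := by simp
  rw [this, Lf_monomial]; simp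

lemma Lf_mul_q (m0 : ℤ) (u v : ℚ) (p : Polynomial ℚ) :
    Lf m0 (p * (1 + C u * X + C v * X ^ 2)) =
      Lf m0 p + u * Lf (m0 + 1) p + v * Lf (m0 + 1 + 1) p := by
  have e : p * (1 + C u * X + C v * X ^ 2)
      = p + C u * (p * X) + C v * ((p * X) * X) := by ring
  rw [e, Lf_add, Lf_add, Lf_C_mul, Lf_C_mul, Lf_mul_X, Lf_mul_X, Lf_mul_X]

lemma qbase (r : ℤ) (hr : 1 ≤ r) (x : ℤ) :
    ((T x : ℤ) : ℚ) + ((T (r-1) + T r : ℤ) : ℚ) / ((T r : ℤ) : ℚ) * ((T (x+1) : ℤ) : ℚ)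
      + ((T (r+1) : ℤ) : ℚ) / ((T r : ℤ) : ℚ) * ((T (x+2) : ℤ) : ℚ)
      = ((T (x + r + 2) : ℤ) : ℚ) / ((T r : ℤ) : ℚ) := by
  have hA := T_ne hr
  have hq : ((T r : ℤ) : ℚ) * ((T x : ℤ) : ℚ) + ((T (r-1) + T r : ℤ) : ℚ) * ((T (x+1) : ℤ) : ℚ)
      + ((T (r+1) : ℤ) : ℚ) * ((T (x+2) : ℤ) : ℚ) = ((T (x + r + 2) : ℤ) : ℚ) := by
    exact_mod_cast congrArg (fun z : ℤ => (z : ℚ)) (baseZ r hr x)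
  field_simp
  push_cast at hq ⊢
  linear_combination hq

lemma keyPow (r : ℤ) (hr : 1 ≤ r) :
    ∀ (k : ℕ) (m0 : ℤ),
      Lf m0 ((1 + C (((T (r-1) + T r : ℤ) : ℚ) / ((T r : ℤ) : ℚ)) * X
          + C (((T (r+1) : ℤ) : ℚ) / ((T r : ℤ) : ℚ)) * X ^ 2) ^ k)
        = ((T (m0 + (r+2)*k) : ℤ) : ℚ) / ((T r : ℤ) : ℚ) ^ k := by
  intro k
  induction k with
  | zero => intro m0; simp [Lf_one]
  | succ k ih =>
    intro m0
    rw [pow_succ, Lf_mul_q, ih, ih, ih]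
    have hA := T_ne hr
    rw [show m0 + 1 + (r+2)*(k:ℤ) = (m0 + (r+2)*(k:ℤ)) + 1 by ring,
        show m0 + 1 + 1 + (r+2)*(k:ℤ) = (m0 + (r+2)*(k:ℤ)) + 2 by ring,
        show m0 + (r+2)*((k:ℕ)+1 : ℕ) = (m0 + (r+2)*(k:ℤ)) + r + 2 by push_cast; ring]
    have qb := qbase r hr (m0 + (r+2)*(k:ℤ))
    calc ((T (m0 + (r+2)*(k:ℤ)) : ℤ) : ℚ) / ((T r : ℤ) : ℚ) ^ k
          + ((T (r-1) + T r : ℤ) : ℚ) / ((T r : ℤ) : ℚ) * (((T ((m0 + (r+2)*(k:ℤ)) + 1) : ℤ) : ℚ) / ((T r : ℤ) : ℚ) ^ k)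
          + ((T (r+1) : ℤ) : ℚ) / ((T r : ℤ) : ℚ) * (((T ((m0 + (r+2)*(k:ℤ)) + 2) : ℤ) : ℚ) / ((T r : ℤ) : ℚ) ^ k)
        = (((T (m0 + (r+2)*(k:ℤ)) : ℤ) : ℚ)
            + ((T (r-1) + T r : ℤ) : ℚ) / ((T r : ℤ) : ℚ) * ((T ((m0 + (r+2)*(k:ℤ)) + 1) : ℤ) : ℚ)
            + ((T (r+1) : ℤ) : ℚ) / ((T r : ℤ) : ℚ) * ((T ((m0 + (r+2)*(k:ℤ)) + 2) : ℤ) : ℚ))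
            / ((T r : ℤ) : ℚ) ^ k := by ring
      _ = (((T ((m0 + (r+2)*(k:ℤ)) + r + 2) : ℤ) : ℚ) / ((T r : ℤ) : ℚ)) / ((T r : ℤ) : ℚ) ^ k := by rw [qb]
      _ = ((T ((m0 + (r+2)*(k:ℤ)) + r + 2) : ℤ) : ℚ) / ((T r : ℤ) : ℚ) ^ (k+1) := by
            rw [div_div]; ring

lemma Lf_expand (m0 : ℤ) (u v : ℚ) (k : ℕ) :
    Lf m0 ((1 + C u * X + C v * X ^ 2) ^ k)
      = ∑ j ∈ Finset.range (k+1), ∑ s ∈ Finset.range (j+1),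
          (k.choose j : ℚ) * (j.choose s : ℚ) * u^(j-s) * v^s
            * ((T (m0 + (j+s : ℕ)) : ℤ) : ℚ) := by
  rw [show (1 + C u * X + C v * X ^ 2) = ((C v * X ^ 2 + C u * X) + 1) by ring, add_pow,
    Lf_sum]
  refine Finset.sum_congr rfl fun j hj => ?_
  rw [add_pow, Finset.sum_mul, Finset.sum_mul, Lf_sum]
  refine Finset.sum_congr rfl fun s hs => ?_
  have hs' : s ≤ j := by simpa [Nat.lt_succ_iff] using hs
  rw [show (C v * X ^ 2) ^ s * (C u * X) ^ (j - s) * ((j.choose s : ℕ) : Polynomial ℚ)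
        * 1 ^ (k - j) * ((k.choose j : ℕ) : Polynomial ℚ)
      = C (v ^ s * u ^ (j-s) * ((j.choose s : ℕ) : ℚ) * ((k.choose j : ℕ) : ℚ))
        * X ^ (2*s + (j-s)) by
    simp only [← C_eq_natCast, C_mul, C_pow, pow_add, pow_mul, mul_pow, one_pow]
    ring]
  rw [C_mul_X_pow_eq_monomial, Lf_monomial, show 2*s + (j-s) = j + s by omega]
  ring

theorem stmt19 : ∀ (m r : ℤ), 1 ≤ r → ∀ k : ℕ,
    ∑ j ∈ Finset.range (k + 1), ∑ s ∈ Finset.range (j + 1),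
        (k.choose j : ℚ) * (j.choose s : ℚ) * ((T (r - 1) + T r : ℤ) : ℚ) ^ (j - s) *
          (T (r + 1) : ℚ) ^ s / (T r : ℚ) ^ j * (T (m - (r + 2) * k + j + s) : ℚ) =
      (T m : ℚ) / (T r : ℚ) ^ k := by
  intro m r hr k
  have hA : ((T r : ℤ) : ℚ) ≠ 0 := T_ne hr
  have hk := keyPow r hr k (m - (r+2)*k)
  rw [Lf_expand, show m - (r+2)*(k:ℤ) + (r+2)*(k:ℤ) = m by ring] at hk
  rw [← hk]
  refine Finset.sum_congr rfl fun j hj => Finset.sum_congr rfl fun s hs => ?_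
  have hs' : s ≤ j := Nat.lt_succ_iff.mp (Finset.mem_range.mp hs)
  rw [show m - (r+2)*(k:ℤ) + ((j + s : ℕ) : ℤ) = m - (r+2)*(k:ℤ) + j + s by push_cast; ring]
  rw [div_pow, div_pow,
    show ((T r : ℤ) : ℚ)^j = ((T r : ℤ) : ℚ)^(j-s) * ((T r : ℤ) : ℚ)^s by
      rw [← pow_add]; congr 1; omega]
  ring
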